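/- Let τ = (1+√5)/2 be the golden ratio. Then the pair of intervals (K_L, K_S) = ([−1, τ⁻¹], [τ⁻¹, τ]) is the unique pair of nonempty compact subsets of ℝ satisfying K_L = (−τ⁻¹)K_L ∪ (−τ⁻¹)K_S and K_S = (−τ⁻¹)K_L + 1, where αK + β denotes {αx + β : x ∈ K}. -/

import Mathlib

open EMetric Set TopologicalSpace

/-- Hausdorff edistance of unions is bounded by the max of the Hausdorff edistances. -/
lemma FibAux.haus_union {α : Type*} [PseudoEMetricSpace α] {s t u v : Set α} :
    hausdorffEdist (s ∪ t) (u ∪ v) ≤ max (hausdorffEdist s u) (hausdorffEdist t v) := by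
  apply hausdorffEdist_le_of_infEdist
  · rintro x (hx | hx)
    · exact le_trans (le_trans (infEdist_anti subset_union_left)
        (infEdist_le_hausdorffEdist_of_mem hx)) (le_max_left _ _)
    · exact le_trans (le_trans (infEdist_anti subset_union_right)
        (infEdist_le_hausdorffEdist_of_mem hx)) (le_max_right _ _)
  · rintro x (hx | hx)
    · refine le_trans (le_trans (infEdist_anti subset_union_left) ?_) (le_max_left _ _)
      rw [show hausdorffEdist = Metric.hausdorffEDist from rfl, hausdorffEdist_comm]
      exact infEdist_le_hausdorffEdist_of_mem hx
    · refine le_trans (le_trans (infEdist_anti subset_union_right) ?_) (le_max_right _ _)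
      rw [show hausdorffEdist = Metric.hausdorffEDist from rfl, hausdorffEdist_comm]
      exact infEdist_le_hausdorffEdist_of_mem hx

lemma FibAux.infEdist_image_le {α β : Type*} [PseudoEMetricSpace α] [PseudoEMetricSpace β]
    {K : NNReal} {f : α → β} (hf : LipschitzWith K f) (x : α) {t : Set α} (ht : t.Nonempty) :
    infEdist (f x) (f '' t) ≤ K * infEdist x t := by
  have : Nonempty t := ht.to_subtype
  show ⨅ y ∈ f '' t, edist (f x) y ≤ K * ⨅ y ∈ t, edist x y
  rw [iInf_image, iInf_subtype', iInf_subtype',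
    ENNReal.mul_iInf (by simp)]
  exact iInf_mono fun y => hf x y

/-- A `K`-Lipschitz map contracts Hausdorff edistance by a factor `K`. -/
lemma FibAux.haus_image_le {α β : Type*} [PseudoEMetricSpace α] [PseudoEMetricSpace β]
    {K : NNReal} {f : α → β} (hf : LipschitzWith K f) {s t : Set α}
    (hs : s.Nonempty) (ht : t.Nonempty) :
    hausdorffEdist (f '' s) (f '' t) ≤ K * hausdorffEdist s t := by
  apply hausdorffEdist_le_of_infEdist
  · rintro _ ⟨x, hx, rfl⟩
    exact le_trans (FibAux.infEdist_image_le hf x ht)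
      (mul_le_mul_right (infEdist_le_hausdorffEdist_of_mem hx) _)
  · rintro _ ⟨x, hx, rfl⟩
    rw [show hausdorffEdist = Metric.hausdorffEDist from rfl, hausdorffEdist_comm]
    exact le_trans (FibAux.infEdist_image_le hf x hs)
      (mul_le_mul_right (infEdist_le_hausdorffEdist_of_mem hx) _)

/-- Image of a closed interval under a decreasing affine map. -/
lemma FibAux.image_neg_affine {c d a b : ℝ} (hc : c < 0) :
    (fun x => c * x + d) '' Set.Icc a b = Set.Icc (c * b + d) (c * a + d) := by
  ext x
  constructor
  · rintro ⟨y, ⟨hy1, hy2⟩, rfl⟩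
    simp only []
    constructor <;> nlinarith
  · rintro ⟨h1, h2⟩
    refine ⟨(x - d) / c, ⟨?_, ?_⟩, ?_⟩
    · rw [le_div_iff_of_neg hc]; nlinarith
    · rw [div_le_iff_of_neg hc]; nlinarith
    · show c * ((x - d) / c) + d = x
      rw [mul_div_cancel₀ _ hc.ne]
      ring

/-- The Hutchinson operator of the (starred) Fibonacci IFS, on nonempty compacts. -/
noncomputable def FibAux.Phi (t : ℝ) (C : NonemptyCompacts ℝ) : NonemptyCompacts ℝ :=
  ⟨⟨(fun x => -t * x) '' C ∪ (fun x => t * t * x - t) '' C,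
    (C.isCompact.image (by continuity)).union (C.isCompact.image (by continuity))⟩,
    (C.nonempty.image _).inl⟩

lemma FibAux.phi_coe (t : ℝ) (C : NonemptyCompacts ℝ) :
    (FibAux.Phi t C : Set ℝ) = (fun x => -t * x) '' C ∪ (fun x => t * t * x - t) '' C := rfl

lemma FibAux.lip1 {t : ℝ} (h0 : 0 < t) : LipschitzWith t.toNNReal (fun x : ℝ => -t * x) := by
  rw [lipschitzWith_iff_dist_le_mul]
  intro x y
  rw [Real.dist_eq, Real.dist_eq, Real.coe_toNNReal _ h0.le]
  have : -t * x - -t * y = -t * (x - y) := by ring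
  rw [this, abs_mul, abs_neg, abs_of_pos h0]

lemma FibAux.lip2 {t : ℝ} (h0 : 0 < t) (h1 : t < 1) :
    LipschitzWith t.toNNReal (fun x : ℝ => t * t * x - t) := by
  rw [lipschitzWith_iff_dist_le_mul]
  intro x y
  rw [Real.dist_eq, Real.dist_eq, Real.coe_toNNReal _ h0.le]
  have : t * t * x - t - (t * t * y - t) = t * t * (x - y) := by ring
  rw [this, abs_mul, abs_of_pos (by nlinarith)]
  nlinarith [abs_nonneg (x - y), mul_nonneg h0.le (abs_nonneg (x - y))]

lemma FibAux.phi_contracting {t : ℝ} (h0 : 0 < t) (h1 : t < 1) :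
    ContractingWith t.toNNReal (FibAux.Phi t) := by
  constructor
  · rw [show (1 : NNReal) = Real.toNNReal 1 by simp]
    exact (Real.toNNReal_lt_toNNReal_iff one_pos).2 h1
  · intro C D
    show hausdorffEdist (FibAux.Phi t C : Set ℝ) (FibAux.Phi t D : Set ℝ) ≤
      (t.toNNReal : ENNReal) * hausdorffEdist (C : Set ℝ) (D : Set ℝ)
    rw [FibAux.phi_coe, FibAux.phi_coe]
    refine le_trans FibAux.haus_union (max_le ?_ ?_)
    · exact FibAux.haus_image_le (FibAux.lip1 h0) C.nonempty D.nonempty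
    · exact FibAux.haus_image_le (FibAux.lip2 h0 h1) C.nonempty D.nonempty

/-- The Fibonacci window system: a pair `(K_L, K_S)` of nonempty compact subsets
of `ℝ` with `K_L = (−τ⁻¹)K_L ∪ (−τ⁻¹)K_S` and `K_S = (−τ⁻¹)K_L + 1`. -/
def FibSystem (τ : ℝ) (K : Set ℝ × Set ℝ) : Prop :=
  (IsCompact K.1 ∧ K.1.Nonempty) ∧
  (IsCompact K.2 ∧ K.2.Nonempty) ∧
  K.1 = (fun x => -τ⁻¹ * x) '' K.1 ∪ (fun x => -τ⁻¹ * x) '' K.2 ∧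
  K.2 = (fun x => -τ⁻¹ * x + 1) '' K.1

/-- For `τ = (1+√5)/2` the golden ratio, the pair of intervals
`([−1, τ⁻¹], [τ⁻¹, τ])` is the unique pair of nonempty compact subsets of `ℝ`
satisfying `K_L = (−τ⁻¹)K_L ∪ (−τ⁻¹)K_S` and `K_S = (−τ⁻¹)K_L + 1`. -/
theorem fibonacci_window (τ : ℝ) (hτ : τ = (1 + Real.sqrt 5) / 2) :
    FibSystem τ (Set.Icc (-1) τ⁻¹, Set.Icc τ⁻¹ τ) ∧
    ∀ K : Set ℝ × Set ℝ, FibSystem τ K →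
      K = (Set.Icc (-1) τ⁻¹, Set.Icc τ⁻¹ τ) := by
  have h5 : Real.sqrt 5 ^ 2 = 5 := Real.sq_sqrt (by norm_num)
  have h5nn : 0 ≤ Real.sqrt 5 := Real.sqrt_nonneg 5
  have hτ1 : 1 < τ := by rw [hτ]; nlinarith
  have hτ2 : τ < 2 := by rw [hτ]; nlinarith
  have hτsq : τ * τ = τ + 1 := by rw [hτ]; nlinarith
  have hτ0 : (0:ℝ) < τ := by linarith
  set t : ℝ := τ⁻¹ with ht_def
  have hteq : t = τ - 1 := inv_eq_of_mul_eq_one_right (by nlinarith)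
  have ht0 : 0 < t := by rw [hteq]; linarith
  have ht1 : t < 1 := by rw [hteq]; linarith
  have htt : t * t = 1 - t := by rw [hteq]; nlinarith
  have htτ : t * τ = 1 := by rw [hteq]; nlinarith
  have hτet : τ = t + 1 := by rw [hteq]; ring
  have hc : -t < 0 := by linarith
  -- rewriting the linear maps in affine form
  have hf : (fun x : ℝ => -t * x) = fun x => -t * x + 0 := by funext x; ring
  -- image computations
  have h_fI : (fun x : ℝ => -t * x) '' Set.Icc (-1) t = Set.Icc (t - 1) t := by
    rw [hf, FibAux.image_neg_affine hc,
      show -t * t + 0 = t - 1 by linear_combination -htt,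
      show -t * (-1) + 0 = t by ring]
  have h_gI : (fun x : ℝ => -t * x + 1) '' Set.Icc (-1) t = Set.Icc t τ := by
    rw [FibAux.image_neg_affine hc,
      show -t * t + 1 = t by linear_combination -htt,
      show -t * (-1) + 1 = τ by linear_combination -hτet]
  have h_fS : (fun x : ℝ => -t * x) '' Set.Icc t τ = Set.Icc (-1) (t - 1) := by
    rw [hf, FibAux.image_neg_affine hc,
      show -t * τ + 0 = -1 by linear_combination -htτ,
      show -t * t + 0 = t - 1 by linear_combination -htt]
  have hunion : Set.Icc (t - 1) t ∪ Set.Icc (-1) (t - 1) = Set.Icc (-1 : ℝ) t := by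
    rw [Set.union_comm]
    exact Set.Icc_union_Icc_eq_Icc (by linarith) (by linarith)
  -- the composed second map
  have hcomp : ∀ A : Set ℝ, (fun x : ℝ => -t * x) '' ((fun x : ℝ => -t * x + 1) '' A)
      = (fun x : ℝ => t * t * x - t) '' A := by
    have hfun : ((fun x : ℝ => -t * x) ∘ (fun x : ℝ => -t * x + 1))
        = (fun x : ℝ => t * t * x - t) := by
      funext x
      simp only [Function.comp_apply]
      ring
    intro A
    rw [← Set.image_comp, hfun]
  have h_hI : (fun x : ℝ => t * t * x - t) '' Set.Icc (-1) t = Set.Icc (-1) (t - 1) := by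
    rw [← hcomp, h_gI, h_fS]
  constructor
  · refine ⟨⟨isCompact_Icc, Set.nonempty_Icc.2 (by linarith)⟩,
      ⟨isCompact_Icc, Set.nonempty_Icc.2 (by linarith)⟩, ?_, ?_⟩
    · show Set.Icc (-1 : ℝ) t = _ ∪ _
      rw [h_fI, h_fS, hunion]
    · exact h_gI.symm
  · rintro ⟨A, B⟩ ⟨⟨hAc, hAne⟩, ⟨hBc, hBne⟩, hA, hB⟩
    simp only at hA hB
    rw [hB, hcomp] at hA
    -- package as nonempty compacts
    have fixA : Function.IsFixedPt (FibAux.Phi t) ⟨⟨A, hAc⟩, hAne⟩ :=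
      NonemptyCompacts.ext hA.symm
    have fixI : Function.IsFixedPt (FibAux.Phi t)
        ⟨⟨Set.Icc (-1) t, isCompact_Icc⟩, Set.nonempty_Icc.2 (by linarith)⟩ := by
      apply NonemptyCompacts.ext
      rw [FibAux.phi_coe]
      show _ = (Set.Icc (-1 : ℝ) t)
      rw [NonemptyCompacts.coe_mk]
      show (fun x : ℝ => -t * x) '' Set.Icc (-1) t ∪
        (fun x : ℝ => t * t * x - t) '' Set.Icc (-1) t = _
      rw [h_fI, h_hI, hunion]
    have hpack := (FibAux.phi_contracting ht0 ht1).fixedPoint_unique' fixA fixI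
    have hAeq : A = Set.Icc (-1 : ℝ) t :=
      congrArg (fun C : NonemptyCompacts ℝ => (C : Set ℝ)) hpack
    have hBeq : B = Set.Icc t τ := by rw [hB, hAeq, h_gI]
    rw [Prod.mk.injEq]
    exact ⟨hAeq, hBeq⟩
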